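/- Let 0 < p < 1/2, p̄ = 1 - p, Q(y|w) = p̄ if y = w else p, and q(w|n) the posterior weights with q(1|n)/q(-1|n) = (p̄/p)^n and q(1|n)+q(-1|n)=1. Define the NSII partial strategy θ(· | n, m) = 1_{sign(n+m)} if n + m ≠ 0 and θ(· | n, m) = 1_{sign(n)} if n + m = 0 (for m ∈ {-1,1}). Then for any finitely supported probability η : ℤ → [0,1] and any y ∈ {-1,1}: Σ_{w ∈ {-1,1}} Σₙ Q(y|w) η(n) q(w|n) · (θ(w | n, y) - θ(w | n, -y)) = (1/2) · η(0) · (p̄ - p), which is nonnegative. -/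

import Mathlib

/-- Truth-telling margin of the NSII partial strategy equals `½ η(0)(p̄ - p) ≥ 0`. -/
theorem nsii_truth_telling_margin (p : ℝ) (hp : 0 < p) (hp' : p < 1/2)
    (Q : ℤ → ℤ → ℝ) (hQ : ∀ y w, Q y w = if y = w then (1 - p) else p)
    (q : ℤ → ℤ → ℝ)
    (hq1 : ∀ n : ℤ, q 1 n = ((1 - p)/p) ^ n / (((1 - p)/p) ^ n + 1))
    (hq2 : ∀ n : ℤ, q (-1) n = 1 / (((1 - p)/p) ^ n + 1))
    (θ : ℤ → ℤ → ℤ → ℝ)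
    (hθ : ∀ w n m, θ w n m =
      if n + m ≠ 0 then (if w = Int.sign (n + m) then 1 else 0)
      else (if w = Int.sign n then 1 else 0))
    (η : ℤ →₀ ℝ) (hη0 : ∀ n, 0 ≤ η n) (hη1 : ∀ n, η n ≤ 1)
    (hηsum : ∑ n ∈ η.support, η n = 1)
    (y : ℤ) (hy : y = 1 ∨ y = -1) :
    (∑ w ∈ ({-1, 1} : Finset ℤ), ∑ n ∈ η.support,
        Q y w * η n * q w n * (θ w n y - θ w n (-y)))
      = (1/2) * η 0 * ((1 - p) - p) ∧
    0 ≤ (1/2) * η 0 * ((1 - p) - p) := by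
  have hq0 : ∀ w, w = 1 ∨ w = -1 → q w 0 = 1/2 := by
    rintro w (rfl | rfl)
    · rw [hq1]; norm_num
    · rw [hq2]; norm_num
  -- θ difference vanishes except at n = 0
  have hdiff : ∀ w n : ℤ, θ w n y - θ w n (-y) =
      if n = 0 then ((if w = y then (1:ℝ) else 0) - (if w = -y then 1 else 0)) else 0 := by
    intro w n
    rw [hθ, hθ]
    by_cases h0 : n = 0
    · subst h0; rcases hy with rfl | rfl <;> norm_num
    · rw [if_neg h0]
      rcases hy with rfl | rfl
      · rcases lt_trichotomy n 0 with hn | hn | hn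
        · rcases eq_or_lt_of_le (by omega : n ≤ -1) with h1 | h1
          · obtain rfl : n = -1 := h1
            norm_num [show ((-2:ℤ)).sign = -1 from rfl,
              show ((-1:ℤ)).sign = -1 from rfl]
          · rw [if_pos (by omega : n + 1 ≠ 0), if_pos (by omega : n + -1 ≠ 0),
              Int.sign_eq_neg_one_of_neg (by omega : n + 1 < 0),
              Int.sign_eq_neg_one_of_neg (by omega : n + -1 < 0)]
            ring
        · exact absurd hn h0
        · rcases eq_or_lt_of_le (by omega : 1 ≤ n) with h1 | h1
          · obtain rfl : n = 1 := h1.symm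
            norm_num [show ((2:ℤ)).sign = 1 from rfl,
              show ((1:ℤ)).sign = 1 from rfl]
          · rw [if_pos (by omega : n + 1 ≠ 0), if_pos (by omega : n + -1 ≠ 0),
              Int.sign_eq_one_of_pos (by omega : 0 < n + 1),
              Int.sign_eq_one_of_pos (by omega : 0 < n + -1)]
            ring
      · simp only [neg_neg]
        rcases lt_trichotomy n 0 with hn | hn | hn
        · rcases eq_or_lt_of_le (by omega : n ≤ -1) with h1 | h1
          · obtain rfl : n = -1 := h1
            norm_num [show ((-2:ℤ)).sign = -1 from rfl,
              show ((-1:ℤ)).sign = -1 from rfl]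
          · rw [if_pos (by omega : n + -1 ≠ 0), if_pos (by omega : n + 1 ≠ 0),
              Int.sign_eq_neg_one_of_neg (by omega : n + -1 < 0),
              Int.sign_eq_neg_one_of_neg (by omega : n + 1 < 0)]
            ring
        · exact absurd hn h0
        · rcases eq_or_lt_of_le (by omega : 1 ≤ n) with h1 | h1
          · obtain rfl : n = 1 := h1.symm
            norm_num [show ((2:ℤ)).sign = 1 from rfl,
              show ((1:ℤ)).sign = 1 from rfl]
          · rw [if_pos (by omega : n + -1 ≠ 0), if_pos (by omega : n + 1 ≠ 0),
              Int.sign_eq_one_of_pos (by omega : 0 < n + -1),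
              Int.sign_eq_one_of_pos (by omega : 0 < n + 1)]
            ring
  have key : ∀ w : ℤ, w = 1 ∨ w = -1 →
      ∑ n ∈ η.support, Q y w * η n * q w n * (θ w n y - θ w n (-y))
        = Q y w * η 0 * (1/2) * ((if w = y then (1:ℝ) else 0) - (if w = -y then 1 else 0)) := by
    intro w hw
    have : ∀ n ∈ η.support, Q y w * η n * q w n * (θ w n y - θ w n (-y))
        = if n = 0 then Q y w * η 0 * (1/2) * ((if w = y then (1:ℝ) else 0) - (if w = -y then 1 else 0)) else 0 := by
      intro n _
      rw [hdiff]
      by_cases h0 : n = 0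
      · subst h0
        rw [hq0 w hw, if_pos (rfl : (0:ℤ) = 0), if_pos (rfl : (0:ℤ) = 0)]
        try ring
      · simp [h0]
    rw [Finset.sum_congr rfl this, Finset.sum_ite_eq' η.support 0]
    by_cases h0 : (0:ℤ) ∈ η.support
    · rw [if_pos h0]
    · have hz : η 0 = 0 := Finsupp.notMem_support_iff.mp h0
      rw [if_neg h0, hz]; ring
  have hsum : (∑ w ∈ ({-1, 1} : Finset ℤ), ∑ n ∈ η.support,
      Q y w * η n * q w n * (θ w n y - θ w n (-y)))
      = (1/2) * η 0 * ((1 - p) - p) := by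
    rw [Finset.sum_pair (by norm_num : (-1:ℤ) ≠ 1),
      key (-1) (Or.inr rfl), key 1 (Or.inl rfl), hQ, hQ]
    rcases hy with rfl | rfl <;> norm_num <;> ring
  refine ⟨hsum, ?_⟩
  have := hη0 0
  nlinarith
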